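/- There exist k₀ ∈ ℕ, a constant C > 0 and a sequence of negative real numbers (ν_k)_{k≥k₀} such that for every integer k ≥ k₀, k⁴π⁴ − (ν_k² − ν_k)·k²π² + ν_k − ν_k³ = 0 and |ν_k + k²π²| ≤ C/k²; that is, ν_k = −k²π² + O(1/k²) as k → ∞. -/

import Mathlib

open Real

lemma ws_key (a : ℝ) (ha : 3 ≤ a) :
    ∃ x : ℝ, x < 0 ∧ x ^ 3 + a * x ^ 2 - (1 + a) * x - a ^ 2 = 0 ∧ |x + a| ≤ 2 / a := by
  have ha0 : 0 < a := by linarith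
  set f : ℝ → ℝ := fun x => x ^ 3 + a * x ^ 2 - (1 + a) * x - a ^ 2 with hf
  have hcont : ContinuousOn f (Set.Icc (-a - 2 / a) (-a)) := by
    apply Continuous.continuousOn; continuity
  have hle : -a - 2 / a ≤ -a := by
    have : 0 < 2 / a := by positivity
    linarith
  have hlo : f (-a - 2 / a) ≤ 0 := by
    have h1 : f (-a - 2 / a) = -a + 2 - 6 / a - 8 / a ^ 3 := by
      simp only [hf]; field_simp; ring
    rw [h1]
    have h2 : 0 < 6 / a := by positivity
    have h3 : 0 < 8 / a ^ 3 := by positivity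
    linarith
  have hhi : (0 : ℝ) ≤ f (-a) := by
    have : f (-a) = a := by simp [hf]; ring
    linarith
  have := intermediate_value_Icc hle hcont
  have hmem : (0 : ℝ) ∈ Set.Icc (f (-a - 2 / a)) (f (-a)) := ⟨hlo, hhi⟩
  obtain ⟨x, hx, hfx⟩ := this hmem
  refine ⟨x, ?_, hfx, ?_⟩
  · have := hx.2; linarith
  · rw [abs_le]
    constructor
    · have := hx.1; linarith
    · have := hx.2
      have : 0 ≤ 2 / a := by positivity
      linarith [hx.2]

theorem wave_schrodinger_second_branch :
    ∃ (k₀ : ℕ) (C : ℝ) (ν : ℕ → ℝ), 0 < C ∧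
      ∀ k : ℕ, k₀ ≤ k →
        ν k < 0 ∧
        (k : ℝ) ^ 4 * π ^ 4 - ((ν k) ^ 2 - ν k) * (k : ℝ) ^ 2 * π ^ 2
          + (ν k - (ν k) ^ 3) = 0 ∧
        |ν k + (k : ℝ) ^ 2 * π ^ 2| ≤ C / (k : ℝ) ^ 2 := by
  have hpi : (3 : ℝ) < π := pi_gt_three
  have ha : ∀ k : ℕ, 1 ≤ k → (3 : ℝ) ≤ (k : ℝ) ^ 2 * π ^ 2 := by
    intro k hk
    have hk1 : (1 : ℝ) ≤ (k : ℝ) := by exact_mod_cast hk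
    have h9 : (9 : ℝ) ≤ π ^ 2 := by nlinarith
    nlinarith [sq_nonneg ((k:ℝ) - 1)]
  refine ⟨1, 1, fun k => if h : 1 ≤ k then (ws_key _ (ha k h)).choose else 0, one_pos, ?_⟩
  intro k hk
  simp only [dif_pos hk]
  obtain ⟨hneg, heq, habs⟩ := (ws_key _ (ha k hk)).choose_spec
  set x := (ws_key ((k : ℝ) ^ 2 * π ^ 2) (ha k hk)).choose
  refine ⟨hneg, by nlinarith [heq], ?_⟩
  have hk1 : (1 : ℝ) ≤ (k : ℝ) := by exact_mod_cast hk
  have hk0 : (0 : ℝ) < (k : ℝ) ^ 2 := by positivity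
  calc |x + (k : ℝ) ^ 2 * π ^ 2| ≤ 2 / ((k : ℝ) ^ 2 * π ^ 2) := habs
    _ ≤ 1 / (k : ℝ) ^ 2 := by
        rw [div_le_div_iff₀ (by positivity) hk0]
        nlinarith [mul_le_mul_of_nonneg_left (show (9:ℝ) ≤ π ^ 2 by nlinarith) (le_of_lt hk0)]
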